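/- Let δ be an algebraic integer of degree 2, a, b integers, p a prime with p ∣ b, p ∤ a, t = v_p(b), k a positive integer with ℓ = v_p(k), and write (a + bδ)^k = a_k + b_k δ. Assume p is odd, or p = 2 and t ≥ 2, or ℓ = 0. If v_p(a^k - 1) ≤ ℓ + t, then v_p(a_k - 1) = v_p(a^k - 1). -/

import Mathlib

/-- coordinates of `δ ^ i` in the basis `{1, δ}`. -/
def stmt10cd (u v : ℤ) : ℕ → ℤ × ℤ
  | 0 => (1, 0)
  | (i+1) => ((stmt10cd u v i).2 * u, (stmt10cd u v i).1 + v * (stmt10cd u v i).2)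

lemma stmt10_three_pow (m : ℕ) (hm : 1 ≤ m) : m + 2 ≤ 3 ^ m := by
  induction m with
  | zero => omega
  | succ n ih =>
    rcases Nat.eq_zero_or_pos n with h | h
    · subst h; norm_num
    · have h1 := ih h
      have h2 : 3 ^ (n + 1) = 3 * 3 ^ n := by ring
      omega

lemma stmt10_exp (p t l m i : ℕ) (hodd3 : Odd p → p ≠ 2)
    (hp2 : 2 ≤ p) (ht1 : 1 ≤ t) (hpm : p ^ m ≤ i) (hi2 : 2 ≤ i)
    (hcase : Odd p ∨ (p = 2 ∧ 2 ≤ t) ∨ l = 0) :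
    l + t + 1 ≤ (l - m) + i * t := by
  have h2m : m < 2 ^ m := Nat.lt_two_pow_self
  have h2p : 2 ^ m ≤ p ^ m := Nat.pow_le_pow_left hp2 m
  have h2t : 2 * t ≤ i * t := Nat.mul_le_mul_right t (by omega)
  rcases hcase with hodd | ⟨rfl, ht2⟩ | hl0
  · have hp3 : 3 ≤ p := by
      have := hodd3 hodd
      omega
    rcases Nat.eq_zero_or_pos m with hm0 | hm1
    · subst hm0; omega
    · have h3m := stmt10_three_pow m hm1
      have h3p : 3 ^ m ≤ p ^ m := Nat.pow_le_pow_left hp3 m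
      have hmi : m + 2 ≤ i := by omega
      have hmul : (m + 2) * t ≤ i * t := Nat.mul_le_mul_right t hmi
      have heq : (m + 2) * t = m * t + 2 * t := by ring
      have hmm : m ≤ m * t := Nat.le_mul_of_pos_right m (by omega)
      omega
  · have hmi : m + 1 ≤ i := by omega
    have hmul : (m + 1) * t ≤ i * t := Nat.mul_le_mul_right t hmi
    have heq : (m + 1) * t = m * t + t := by ring
    have hmm : m * 2 ≤ m * t := Nat.mul_le_mul_left m ht2
    omega
  · subst hl0; omega

theorem stmt_10 {R : Type*} [CommRing R] (δ : R) (u v : ℤ)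
    (h2 : δ ^ 2 = (u : R) + (v : R) * δ)
    (hindep : ∀ m n m_ n_ : ℤ, (m : R) + (n : R) * δ = (m_ : R) + (n_ : R) * δ → m = m_ ∧ n = n_)
    (a b : ℤ) (p : ℕ) (hp : p.Prime) (hpb : (p : ℤ) ∣ b) (hpa : ¬ (p : ℤ) ∣ a) (hb : b ≠ 0)
    (t : ℕ) (ht : t = padicValInt p b)
    (k : ℕ) (hk : 0 < k) (ℓ : ℕ) (hℓ : ℓ = padicValNat p k)
    (a_k b_k : ℤ) (hpow : ((a : R) + (b : R) * δ) ^ k = (a_k : R) + (b_k : R) * δ)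
    (hcase : Odd p ∨ (p = 2 ∧ 2 ≤ t) ∨ ℓ = 0)
    (hne : a ^ k ≠ 1) (hle : padicValInt p (a ^ k - 1) ≤ ℓ + t) :
    padicValInt p (a_k - 1) = padicValInt p (a ^ k - 1) := by
  haveI : Fact p.Prime := ⟨hp⟩
  set c : ℕ → ℤ := fun i => (stmt10cd u v i).1 with hc
  set d : ℕ → ℤ := fun i => (stmt10cd u v i).2 with hd
  have ht1 : 1 ≤ t := by
    rw [ht]
    rcases (padicValInt_dvd_iff 1 b).1 (by simpa using hpb) with h | h
    · exact absurd h hb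
    · exact h
  have hptb : (p : ℤ) ^ t ∣ b := ht ▸ padicValInt_dvd b
  have hplk : p ^ ℓ ∣ k := hℓ ▸ pow_padicValNat_dvd
  have hδpow : ∀ i, δ ^ i = (c i : R) + (d i : R) * δ := by
    intro i
    induction i with
    | zero => simp [hc, hd, stmt10cd]
    | succ n ih =>
      have hstep : ((c n : R) + (d n : R) * δ) * δ = (d n : R) * δ ^ 2 + (c n : R) * δ := by
        ring
      rw [pow_succ, ih, hstep, h2]
      have hc1 : c (n + 1) = d n * u := rfl
      have hd1 : d (n + 1) = c n + v * d n := rfl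
      rw [hc1, hd1]
      push_cast
      ring
  -- integer coordinates of the binomial expansion
  set f : ℕ → ℤ := fun i => (k.choose i : ℤ) * a ^ (k - i) * b ^ i * c i with hf
  set g : ℕ → ℤ := fun i => (k.choose i : ℤ) * a ^ (k - i) * b ^ i * d i with hg
  set A : ℤ := ∑ i ∈ Finset.range (k + 1), f i with hA
  set B : ℤ := ∑ i ∈ Finset.range (k + 1), g i with hB
  have hAB : ((a : R) + (b : R) * δ) ^ k = (A : R) + (B : R) * δ := by
    have h1 : ((a : R) + (b : R) * δ) ^ k
        = ∑ i ∈ Finset.range (k + 1), ((f i : R) + (g i : R) * δ) := by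
      rw [add_comm ((a : R)), add_pow]
      refine Finset.sum_congr rfl fun i hi => ?_
      rw [mul_pow, hδpow i]
      simp only [hf, hg]
      push_cast
      ring
    rw [h1, Finset.sum_add_distrib, ← Finset.sum_mul, hA, hB]
    push_cast
    ring
  have hak : a_k = A := (hindep a_k b_k A B (hpow.symm.trans hAB)).1
  -- A - a^k is the tail of the sum
  have hsum : A - a ^ k = ∑ i ∈ Finset.Ico 2 (k + 1), f i := by
    have hsplit : ∑ i ∈ Finset.range (k + 1), f i
        = (∑ i ∈ Finset.Ico 0 2, f i) + ∑ i ∈ Finset.Ico 2 (k + 1), f i := by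
      rw [Finset.range_eq_Ico, ← Finset.sum_Ico_consecutive _ (Nat.zero_le 2) (by omega)]
    have hf0 : f 0 = a ^ k := by simp [hf, hc, stmt10cd]
    have hf1 : f 1 = 0 := by simp [hf, hc, stmt10cd]
    have hIco : ∑ i ∈ Finset.Ico 0 2, f i = f 0 + f 1 := by
      rw [show Finset.Ico 0 2 = Finset.range 2 from rfl, Finset.sum_range_succ,
        Finset.sum_range_one]
    rw [hA, hsplit, hIco, hf0, hf1]
    ring
  -- divisibility of each tail term
  have hterm : ∀ i ∈ Finset.Ico 2 (k + 1), (p : ℤ) ^ (ℓ + t + 1) ∣ f i := by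
    intro i hi
    rw [Finset.mem_Ico] at hi
    obtain ⟨hi2, hik⟩ := hi
    obtain ⟨j, hj⟩ : p ^ (padicValNat p i) ∣ i := pow_padicValNat_dvd
    have hpj : ¬ p ∣ j := by
      intro hdvd
      obtain ⟨s, hs⟩ := hdvd
      refine pow_succ_padicValNat_not_dvd (p := p) (n := i) (by omega) ⟨s, ?_⟩
      calc i = p ^ padicValNat p i * j := hj
        _ = p ^ (padicValNat p i + 1) * s := by rw [hs, pow_succ]; ring
    set m : ℕ := padicValNat p i with hm
    -- p^(ℓ - m) ∣ choose k i
    have hchoose : p ^ (ℓ - m) ∣ k.choose i := by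
      rcases le_or_gt ℓ m with h | h
      · simpa [Nat.sub_eq_zero_of_le h] using Nat.one_dvd _
      · have hkdvd : k ∣ k.choose i * i := by
          obtain ⟨n, rfl⟩ : ∃ n, k = n + 1 := ⟨k - 1, by omega⟩
          obtain ⟨jj, rfl⟩ : ∃ jj, i = jj + 1 := ⟨i - 1, by omega⟩
          exact ⟨n.choose jj, (Nat.add_one_mul_choose_eq n jj).symm⟩
        have h1 : p ^ ℓ ∣ k.choose i * i := hplk.trans hkdvd
        have h2 : p ^ m * p ^ (ℓ - m) ∣ p ^ m * (k.choose i * j) := by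
          rw [← pow_add]
          have : m + (ℓ - m) = ℓ := by omega
          rw [this]
          calc p ^ ℓ ∣ k.choose i * i := h1
            _ = p ^ m * (k.choose i * j) := by rw [hj]; ring
        have h3 : p ^ (ℓ - m) ∣ k.choose i * j :=
          (Nat.mul_dvd_mul_iff_left (pow_pos hp.pos m)).1 h2
        exact (Nat.Coprime.pow_left _ (hp.coprime_iff_not_dvd.mpr hpj)).dvd_of_dvd_mul_right h3
    have hchooseZ : (p : ℤ) ^ (ℓ - m) ∣ (k.choose i : ℤ) := by
      exact_mod_cast Int.natCast_dvd_natCast.2 hchoose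
    have hbZ : (p : ℤ) ^ (i * t) ∣ b ^ i := by
      rw [mul_comm, pow_mul]
      exact pow_dvd_pow_of_dvd hptb i
    -- the exponent inequality
    have hexp : ℓ + t + 1 ≤ (ℓ - m) + i * t := by
      have hpm : p ^ m ≤ i := Nat.le_of_dvd (by omega) (hm ▸ pow_padicValNat_dvd)
      refine stmt10_exp p t ℓ m i ?_ hp.two_le ht1 hpm hi2 hcase
      intro hodd hp2
      rw [hp2] at hodd
      exact (by decide : ¬ Odd 2) hodd
    have hdvd1 : (p : ℤ) ^ (ℓ + t + 1) ∣ (k.choose i : ℤ) * b ^ i := by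
      calc (p : ℤ) ^ (ℓ + t + 1) ∣ (p : ℤ) ^ ((ℓ - m) + i * t) := pow_dvd_pow _ hexp
        _ = (p : ℤ) ^ (ℓ - m) * (p : ℤ) ^ (i * t) := pow_add _ _ _
        _ ∣ (k.choose i : ℤ) * b ^ i := mul_dvd_mul hchooseZ hbZ
    have hfi : f i = ((k.choose i : ℤ) * b ^ i) * (a ^ (k - i) * c i) := by
      rw [hf]; ring
    rw [hfi]
    exact hdvd1.mul_right _
  have hdvdA : (p : ℤ) ^ (ℓ + t + 1) ∣ A - a ^ k := by
    rw [hsum]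
    exact Finset.dvd_sum hterm
  -- final valuation comparison
  set N : ℕ := padicValInt p (a ^ k - 1) with hN
  have hx0 : a ^ k - 1 ≠ 0 := sub_ne_zero.mpr hne
  have hNd : (p : ℤ) ^ N ∣ a ^ k - 1 := hN ▸ padicValInt_dvd _
  have hNs : ¬ (p : ℤ) ^ (N + 1) ∣ a ^ k - 1 := by
    rw [padicValInt_dvd_iff]
    push_neg
    exact ⟨hx0, by omega⟩
  have hy : (p : ℤ) ^ (N + 1) ∣ A - a ^ k :=
    dvd_trans (pow_dvd_pow _ (by omega)) hdvdA
  have key : a_k - 1 = (a ^ k - 1) + (A - a ^ k) := by rw [hak]; ring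
  have h1 : (p : ℤ) ^ N ∣ a_k - 1 := by
    rw [key]
    exact dvd_add hNd (dvd_trans (pow_dvd_pow _ (Nat.le_succ N)) hy)
  have h2d : ¬ (p : ℤ) ^ (N + 1) ∣ a_k - 1 := by
    intro h
    apply hNs
    have : (a_k - 1) - (A - a ^ k) = a ^ k - 1 := by rw [hak]; ring
    calc (p : ℤ) ^ (N + 1) ∣ (a_k - 1) - (A - a ^ k) := dvd_sub h hy
      _ = a ^ k - 1 := this
  have hak0 : a_k - 1 ≠ 0 := by
    intro h
    exact h2d (h ▸ dvd_zero _)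
  rcases (padicValInt_dvd_iff N (a_k - 1)).1 h1 with h | h
  · exact absurd h hak0
  · have h3 : ¬ (N + 1 ≤ padicValInt p (a_k - 1)) := fun hcon =>
      h2d ((padicValInt_dvd_iff _ _).2 (Or.inr hcon))
    omega
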